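/- A point x ∈ ℝ^n satisfies u_i(x) = 0 for all i (where u_i is the lazy-rule control for constant disturbance d) if and only if x ∈ P(d,E). That is, min over ỹ_{ij} ∈ [x_j + d_{ij} - ξ, x_j + d_{ij} + ξ] of |Σ_{j∈N_i}(ỹ_{ij}-x_i)| equals 0 for all i if and only if -(Σ_{j∈N_i} d_{ij})/|N_i| - ξ ≤ (Σ_{j∈N_i} x_j)/|N_i| - x_i ≤ -(Σ_{j∈N_i} d_{ij})/|N_i| + ξ for all i. -/

import Mathlib

/-- the lazy-rule control vanishes at every agent (for constant
disturbance d) if and only if x belongs to the polyhedron P(d,E). -/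
theorem lazy_control_zero_iff_mem_P
    (n : ℕ) (G : SimpleGraph (Fin n)) [DecidableRel G.Adj]
    (hN : ∀ i, (G.neighborFinset i).Nonempty)
    (ξ : ℝ) (hξ : 0 < ξ) (d : Fin n → Fin n → ℝ)
    (hd : ∀ i j, -ξ ≤ d i j ∧ d i j ≤ ξ) (x : Fin n → ℝ) :
    (∀ i : Fin n, ∃ ytil : Fin n → ℝ,
        (∀ j ∈ G.neighborFinset i,
          x j + d i j - ξ ≤ ytil j ∧ ytil j ≤ x j + d i j + ξ) ∧
        ∑ j ∈ G.neighborFinset i, (ytil j - x i) = 0)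
    ↔ (∀ i : Fin n,
        -(∑ j ∈ G.neighborFinset i, d i j) / ((G.neighborFinset i).card : ℝ) - ξ ≤
          (∑ j ∈ G.neighborFinset i, x j) / ((G.neighborFinset i).card : ℝ) - x i ∧
        (∑ j ∈ G.neighborFinset i, x j) / ((G.neighborFinset i).card : ℝ) - x i ≤
          -(∑ j ∈ G.neighborFinset i, d i j) / ((G.neighborFinset i).card : ℝ) + ξ) := by
  constructor
  · intro h i
    obtain ⟨y, hy, hsum⟩ := h i
    set N := G.neighborFinset i with hNdef
    set c : ℝ := (N.card : ℝ) with hcdef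
    have hc : (0 : ℝ) < c := by
      rw [hcdef]; exact_mod_cast Finset.card_pos.mpr (hN i)
    have hsum' : ∑ j ∈ N, y j = c * x i := by
      have := hsum
      rw [Finset.sum_sub_distrib, Finset.sum_const, nsmul_eq_mul] at this
      linarith
    have h1 : ∑ j ∈ N, (x j + d i j - ξ) ≤ ∑ j ∈ N, y j :=
      Finset.sum_le_sum fun j hj => (hy j hj).1
    have h2 : ∑ j ∈ N, y j ≤ ∑ j ∈ N, (x j + d i j + ξ) :=
      Finset.sum_le_sum fun j hj => (hy j hj).2
    have e1 : ∑ j ∈ N, (x j + d i j - ξ) =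
        (∑ j ∈ N, x j) + (∑ j ∈ N, d i j) - c * ξ := by
      rw [Finset.sum_sub_distrib, Finset.sum_add_distrib, Finset.sum_const, nsmul_eq_mul]
    have e2 : ∑ j ∈ N, (x j + d i j + ξ) =
        (∑ j ∈ N, x j) + (∑ j ∈ N, d i j) + c * ξ := by
      rw [Finset.sum_add_distrib, Finset.sum_add_distrib, Finset.sum_const, nsmul_eq_mul]
    rw [e1, hsum'] at h1
    rw [hsum', e2] at h2
    constructor
    · have eA : -(∑ j ∈ N, d i j) / c - ξ = (-(∑ j ∈ N, d i j) - c * ξ) / c := by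
        field_simp
      have eB : (∑ j ∈ N, x j) / c - x i = ((∑ j ∈ N, x j) - c * x i) / c := by
        field_simp
      rw [eA, eB, div_le_div_iff_of_pos_right hc]
      linarith
    · have eA : -(∑ j ∈ N, d i j) / c + ξ = (-(∑ j ∈ N, d i j) + c * ξ) / c := by
        field_simp
      have eB : (∑ j ∈ N, x j) / c - x i = ((∑ j ∈ N, x j) - c * x i) / c := by
        field_simp
      rw [eA, eB, div_le_div_iff_of_pos_right hc]
      linarith
  · intro h i
    set N := G.neighborFinset i with hNdef
    set c : ℝ := (N.card : ℝ) with hcdef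
    have hc : (0 : ℝ) < c := by
      rw [hcdef]; exact_mod_cast Finset.card_pos.mpr (hN i)
    obtain ⟨hl, hr⟩ := h i
    set t : ℝ := x i - ((∑ j ∈ N, x j) + (∑ j ∈ N, d i j)) / c with htdef
    have hadd : ((∑ j ∈ N, x j) + (∑ j ∈ N, d i j)) / c
        = (∑ j ∈ N, x j) / c + (∑ j ∈ N, d i j) / c := add_div _ _ _
    have hnd : -(∑ j ∈ N, d i j) / c = -((∑ j ∈ N, d i j) / c) := neg_div _ _
    have ht1 : -ξ ≤ t := by rw [htdef, hadd]; rw [hnd] at hr; linarith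
    have ht2 : t ≤ ξ := by rw [htdef, hadd]; rw [hnd] at hl; linarith
    refine ⟨fun j => x j + d i j + t, fun j _ => ⟨by dsimp only; linarith, by dsimp only; linarith⟩, ?_⟩
    have : ∑ j ∈ N, (x j + d i j + t - x i)
        = (∑ j ∈ N, x j) + (∑ j ∈ N, d i j) + c * t - c * x i := by
      rw [show (fun j => x j + d i j + t - x i) = fun j => x j + d i j + (t - x i) by
        funext j; ring]
      rw [Finset.sum_add_distrib, Finset.sum_add_distrib, Finset.sum_const, nsmul_eq_mul]
      ring
    rw [this, htdef]
    field_simp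
    ring
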